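/- Let n, k be integers satisfying n ≥ 1 and n/2 ≤ k ≤ n, and define x = (2k − n)/√n. If B_n is a Binomial random variable with distribution B(n, 1/2), then Pr[B_n ≥ k] ≥ √n · C(n−1, k−1) · 2^{−n} · (1 − Φ(x))/φ(x). -/

import Mathlib

open Real

/-- Density of the standard Gaussian `N(0,1)`. -/
noncomputable def stdGaussPDF (x : ℝ) : ℝ := (Real.sqrt (2 * π))⁻¹ * Real.exp (-x ^ 2 / 2)

/-- Cumulative distribution function of the standard Gaussian `N(0,1)`. -/
noncomputable def stdGaussCDF (x : ℝ) : ℝ := ∫ t in Set.Iic x, stdGaussPDF t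

section McKayAux

open MeasureTheory Set Filter

noncomputable def Efun (x : ℝ) : ℝ := ∫ s in Set.Ioi x, Real.exp (-s^2/2)
noncomputable def Mfun (x : ℝ) : ℝ := Real.exp (x^2/2) * Efun x

lemma gcont : Continuous (fun s : ℝ => Real.exp (-s^2/2)) := by fun_prop

lemma gint : Integrable (fun s : ℝ => Real.exp (-s^2/2)) := by
  have h := integrable_exp_neg_mul_sq (by norm_num : (0:ℝ) < 1/2)
  convert h using 2 with s
  ring_nf

lemma gtot : ∫ s : ℝ, Real.exp (-s^2/2) = Real.sqrt (2*π) := by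
  have h := integral_gaussian (1/2)
  have heq : (fun s : ℝ => Real.exp (-s^2/2)) = fun s : ℝ => Real.exp (-(1/2) * s^2) := by
    funext s; ring_nf
  rw [heq, h]
  norm_num [mul_comm]

lemma gtendsto : Tendsto (fun s : ℝ => Real.exp (-s^2/2)) atTop (nhds 0) := by
  apply Real.tendsto_exp_atBot.comp
  have h1 : Tendsto (fun s : ℝ => s^2/2) atTop atTop :=
    (tendsto_pow_atTop (two_ne_zero)).atTop_div_const (by norm_num)
  have := tendsto_neg_atTop_atBot.comp h1
  convert this using 2 with s
  simp [Function.comp]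
  ring

lemma gexp_deriv (s : ℝ) : HasDerivAt (fun y : ℝ => Real.exp (-y^2/2)) (-s * Real.exp (-s^2/2)) s := by
  have h2 : HasDerivAt (fun y : ℝ => -y^2/2) (-s) s := by
    have := ((hasDerivAt_pow 2 s).div_const 2).neg
    simp only [Pi.neg_def] at this
    rw [show (fun y : ℝ => -y^2/2) = fun i => -(i^2/2) by funext y; ring]
    exact this.congr_deriv (by norm_num)
  simpa [mul_comm] using h2.exp

lemma negg_deriv (s : ℝ) : HasDerivAt (fun y : ℝ => -Real.exp (-y^2/2)) (s * Real.exp (-s^2/2)) s := by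
  simpa [Pi.neg_def] using (gexp_deriv s).neg

lemma int_s_exp (x : ℝ) (hx : 0 ≤ x) :
    ∫ s in Ioi x, s * Real.exp (-s^2/2) = Real.exp (-x^2/2) := by
  have h := integral_Ioi_of_hasDerivAt_of_nonneg
    (g := fun y : ℝ => -Real.exp (-y^2/2)) (g' := fun s : ℝ => s * Real.exp (-s^2/2))
    (a := x) (l := 0)
    ((negg_deriv x).continuousAt.continuousWithinAt)
    (fun s _ => negg_deriv s)
    (fun s hs => by
      have : (0:ℝ) < s := lt_of_le_of_lt hx hs
      positivity)
    (by simpa using gtendsto.neg)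
  simpa using h

lemma intOn_s_exp (x : ℝ) (hx : 0 ≤ x) :
    IntegrableOn (fun s : ℝ => s * Real.exp (-s^2/2)) (Ioi x) := by
  apply integrableOn_Ioi_deriv_of_nonneg
    ((negg_deriv x).continuousAt.continuousWithinAt)
    (fun s _ => negg_deriv s)
    (fun s hs => by
      have : (0:ℝ) < s := lt_of_le_of_lt hx hs
      positivity)
    (l := 0)
    (by simpa using gtendsto.neg)

lemma tME (x : ℝ) (hx : 0 ≤ x) : x * Efun x ≤ Real.exp (-x^2/2) := by
  have h1 : x * Efun x = ∫ s in Ioi x, x * Real.exp (-s^2/2) := by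
    unfold Efun; rw [integral_const_mul]
  rw [h1, ← int_s_exp x hx]
  apply setIntegral_mono_on (gint.const_mul x).integrableOn (intOn_s_exp x hx) measurableSet_Ioi
  intro s hs
  have hxs : x ≤ s := le_of_lt hs
  have : (0:ℝ) < Real.exp (-s^2/2) := Real.exp_pos _
  nlinarith

lemma invg_deriv (s : ℝ) (hs : 0 < s) :
    HasDerivAt (fun y : ℝ => -Real.exp (-y^2/2) / y) ((1 + (s^2)⁻¹) * Real.exp (-s^2/2)) s := by
  have := (negg_deriv s).div (hasDerivAt_id s) (ne_of_gt hs)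
  refine this.congr_deriv ?_
  simp only [id]
  field_simp
  ring

lemma invgtendsto : Tendsto (fun s : ℝ => -Real.exp (-s^2/2) / s) atTop (nhds 0) := by
  have h : Tendsto (fun s : ℝ => -Real.exp (-s^2/2) * s⁻¹) atTop (nhds (-0 * 0)) :=
    (gtendsto.neg).mul tendsto_inv_atTop_zero
  simpa [div_eq_mul_inv] using h

lemma int_invg (x : ℝ) (hx : 0 < x) :
    ∫ s in Ioi x, (1 + (s^2)⁻¹) * Real.exp (-s^2/2) = Real.exp (-x^2/2) / x := by
  have h := integral_Ioi_of_hasDerivAt_of_nonneg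
    (g := fun y : ℝ => -Real.exp (-y^2/2) / y)
    (g' := fun s : ℝ => (1 + (s^2)⁻¹) * Real.exp (-s^2/2)) (a := x) (l := 0)
    ((invg_deriv x hx).continuousAt.continuousWithinAt)
    (fun s hs => invg_deriv s (lt_trans hx hs))
    (fun s hs => by
      have h1 : (0:ℝ) < s := lt_trans hx hs
      positivity)
    invgtendsto
  rw [h]
  field_simp
  ring

lemma intOn_invg (x : ℝ) (hx : 0 < x) :
    IntegrableOn (fun s : ℝ => (1 + (s^2)⁻¹) * Real.exp (-s^2/2)) (Ioi x) := by
  apply integrableOn_Ioi_deriv_of_nonneg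
    ((invg_deriv x hx).continuousAt.continuousWithinAt)
    (fun s hs => invg_deriv s (lt_trans hx hs))
    (fun s hs => by
      have h1 : (0:ℝ) < s := lt_trans hx hs
      positivity)
    (l := 0) invgtendsto

lemma Efun_lower (x : ℝ) (hx : 0 < x) : x * Real.exp (-x^2/2) ≤ (1 + x^2) * Efun x := by
  have key : (x^2/(1+x^2)) * (Real.exp (-x^2/2) / x) ≤ Efun x := by
    have h2 : (x^2/(1+x^2)) * (Real.exp (-x^2/2) / x)
        = ∫ s in Ioi x, (x^2/(1+x^2)) * ((1 + (s^2)⁻¹) * Real.exp (-s^2/2)) := by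
      rw [integral_const_mul, int_invg x hx]
    rw [h2]
    apply setIntegral_mono_on ((intOn_invg x hx).const_mul _) gint.integrableOn measurableSet_Ioi
    intro s hs
    have hxs : x < s := hs
    have hs0 : (0:ℝ) < s := lt_trans hx hs
    have he : (0:ℝ) < Real.exp (-s^2/2) := Real.exp_pos _
    have h3 : x^2 * (1 + (s^2)⁻¹) ≤ 1 + x^2 := by
      have h4 : x^2/s^2 ≤ 1 := by
        rw [div_le_one (by positivity)]
        nlinarith
      have h5 : x^2 * (s^2)⁻¹ ≤ 1 := by rw [← div_eq_mul_inv]; exact h4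
      nlinarith
    rw [div_mul_eq_mul_div, div_le_iff₀ (by positivity)]
    nlinarith
  have hpos : (0:ℝ) < 1 + x^2 := by positivity
  rw [div_mul_div_comm] at key
  rw [← sub_nonneg] at key ⊢
  have := mul_le_mul_of_nonneg_left key (le_of_lt hpos)
  -- (1+x^2) * (x^2 * exp/( (1+x^2)*x )) = x*exp
  have heq : (1+x^2) * (x^2 * Real.exp (-x^2/2) / ((1+x^2)*x)) = x * Real.exp (-x^2/2) := by
    field_simp
  nlinarith [mul_le_mul_of_nonneg_left key (le_of_lt hpos), heq]

lemma Efun_nonneg (x : ℝ) : 0 ≤ Efun x := by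
  apply integral_nonneg; intro s; positivity

lemma Mfun_nonneg (x : ℝ) : 0 ≤ Mfun x := by
  have := Efun_nonneg x; unfold Mfun; positivity

lemma Efun_hasDeriv (x : ℝ) : HasDerivAt Efun (-Real.exp (-x^2/2)) x := by
  have key : ∀ y : ℝ, Efun y = (∫ s : ℝ, Real.exp (-s^2/2)) - ((∫ s in Iic (0:ℝ), Real.exp (-s^2/2)) + ∫ s in (0:ℝ)..y, Real.exp (-s^2/2)) := by
    intro y
    rw [← intervalIntegral.integral_Iic_sub_Iic (gint.integrableOn) (gint.integrableOn)]
    have h := integral_add_compl (measurableSet_Iic (a := y)) gint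
    rw [compl_Iic] at h
    unfold Efun; linarith
  have hd : HasDerivAt (fun y => ∫ s in (0:ℝ)..y, Real.exp (-s^2/2)) (Real.exp (-x^2/2)) x := by
    apply intervalIntegral.integral_hasDerivAt_right gint.intervalIntegrable
      (gcont.stronglyMeasurableAtFilter _ _) (gcont.continuousAt)
  have : HasDerivAt (fun y => (∫ s : ℝ, Real.exp (-s^2/2)) - ((∫ s in Iic (0:ℝ), Real.exp (-s^2/2)) + ∫ s in (0:ℝ)..y, Real.exp (-s^2/2))) (-(Real.exp (-x^2/2))) x := by
    simpa using ((hd.const_add (∫ s in Iic (0:ℝ), Real.exp (-s^2/2))).const_sub (∫ s : ℝ, Real.exp (-s^2/2)))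
  have heq : Efun = fun y => (∫ s : ℝ, Real.exp (-s^2/2)) - ((∫ s in Iic (0:ℝ), Real.exp (-s^2/2)) + ∫ s in (0:ℝ)..y, Real.exp (-s^2/2)) := funext key
  rw [heq]
  simpa using this

lemma Mfun_hasDeriv (x : ℝ) : HasDerivAt Mfun (x * Mfun x - 1) x := by
  have h1 : HasDerivAt (fun y : ℝ => Real.exp (y^2/2)) (x * Real.exp (x^2/2)) x := by
    have h2 : HasDerivAt (fun y : ℝ => y^2/2) x x := by
      simpa using ((hasDerivAt_pow 2 x).div_const 2)
    simpa [mul_comm] using h2.exp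
  have := h1.mul (Efun_hasDeriv x)
  have heq : x * Real.exp (x^2/2) * Efun x + Real.exp (x^2/2) * -Real.exp (-x^2/2) = x * Mfun x - 1 := by
    have : Real.exp (x^2/2) * Real.exp (-x^2/2) = 1 := by
      rw [← Real.exp_add]; ring_nf; exact Real.exp_zero
    unfold Mfun; nlinarith [this]
  rw [heq] at this
  exact this

lemma Mfun_diff : Differentiable ℝ Mfun := fun x => (Mfun_hasDeriv x).differentiableAt

lemma tM_le_one (x : ℝ) (hx : 0 ≤ x) : x * Mfun x ≤ 1 := by
  have h := tME x hx
  have h2 : Real.exp (x^2/2) * Real.exp (-x^2/2) = 1 := by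
    rw [← Real.exp_add]; ring_nf; exact Real.exp_zero
  have h3 : (0:ℝ) < Real.exp (x^2/2) := Real.exp_pos _
  unfold Mfun
  nlinarith

lemma Mfun_lower (x : ℝ) (hx : 0 ≤ x) : x ≤ (1 + x^2) * Mfun x := by
  rcases eq_or_lt_of_le hx with h | h
  · have := Mfun_nonneg 0
    rw [← h]
    nlinarith [Mfun_nonneg 0]
  · have h1 := Efun_lower x h
    have h2 : Real.exp (x^2/2) * Real.exp (-x^2/2) = 1 := by
      rw [← Real.exp_add]; ring_nf; exact Real.exp_zero
    have h3 : (0:ℝ) < Real.exp (x^2/2) := Real.exp_pos _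
    unfold Mfun
    nlinarith [mul_le_mul_of_nonneg_left h1 (le_of_lt h3)]

lemma tM_mono {a t : ℝ} (ha : 0 ≤ a) (hat : a ≤ t) : a * Mfun a ≤ t * Mfun t := by
  have hmono : MonotoneOn (fun t : ℝ => t * Mfun t) (Ici 0) := by
    apply monotoneOn_of_deriv_nonneg (convex_Ici 0)
    · exact (Continuous.mul continuous_id Mfun_diff.continuous).continuousOn
    · exact ((differentiable_id.mul Mfun_diff).differentiableOn)
    · intro x hx
      rw [interior_Ici] at hx
      have hx0 : (0:ℝ) < x := hx
      have hd : HasDerivAt (fun t : ℝ => t * Mfun t) (1 * Mfun x + x * (x * Mfun x - 1)) x :=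
        (hasDerivAt_id x).mul (Mfun_hasDeriv x)
      rw [hd.deriv]
      nlinarith [Mfun_lower x (le_of_lt hx0)]
  exact hmono ha (le_trans ha hat) hat

lemma M_anti {a b : ℝ} (ha : 0 ≤ a) (hab : a ≤ b) : Mfun b ≤ Mfun a := by
  have hmono : AntitoneOn Mfun (Ici 0) := by
    apply antitoneOn_of_deriv_nonpos (convex_Ici 0)
    · exact Mfun_diff.continuous.continuousOn
    · exact Mfun_diff.differentiableOn
    · intro x hx
      rw [interior_Ici] at hx
      rw [(Mfun_hasDeriv x).deriv]
      have := tM_le_one x (le_of_lt hx)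
      linarith
  exact hmono ha (le_trans ha hab) hab

lemma M_slope {a b : ℝ} (ha : 0 ≤ a) (hab : a ≤ b) :
    Mfun a - Mfun b ≤ (b - a) * (1 - a * Mfun a) := by
  have hmono : MonotoneOn (fun t : ℝ => Mfun t + (1 - a * Mfun a) * t) (Ici a) := by
    apply monotoneOn_of_deriv_nonneg (convex_Ici a)
    · exact (Mfun_diff.continuous.add (continuous_const.mul continuous_id)).continuousOn
    · exact (Mfun_diff.add ((differentiable_const _).mul differentiable_id)).differentiableOn
    · intro x hx
      rw [interior_Ici] at hx
      have hd : HasDerivAt (fun t : ℝ => Mfun t + (1 - a * Mfun a) * t)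
          ((x * Mfun x - 1) + (1 - a * Mfun a) * 1) x :=
        (Mfun_hasDeriv x).add (((hasDerivAt_id x).const_mul _))
      rw [hd.deriv]
      have := tM_mono ha (le_of_lt hx)
      linarith
  have := hmono (self_mem_Ici) (mem_Ici.mpr hab) hab
  simp only at this
  nlinarith

lemma star (N a : ℝ) (hN : 0 < N) (ha : 0 ≤ a) :
    (N + a) * Mfun a - (N - a) * Mfun (a + 2/N) ≤ 2 := by
  set b := a + 2/N with hb
  have hab : a ≤ b := by
    have : 0 < 2/N := by positivity
    simp [hb]; linarith
  have hs := M_slope ha hab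
  have hdec := M_anti ha hab
  have hNb : N * (b - a) = 2 := by
    rw [hb]; field_simp; ring
  have haM : 0 ≤ a * Mfun a := mul_nonneg ha (Mfun_nonneg a)
  nlinarith [mul_le_mul_of_nonneg_left hs (le_of_lt hN),
    mul_le_mul_of_nonneg_left hdec ha]

lemma algebra_step (N a kR nR C1 C2 Ma Mb : ℝ) (hN : 0 < N) (hk0 : 0 < kR)
    (hNsq : N^2 = nR) (hNa : N*a = 2*kR - nR) (hC1n : 0 ≤ C1)
    (hRatio : kR*C2 = (nR - kR)*C1)
    (hstar : (N+a)*Ma - (N-a)*Mb ≤ 2) :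
    N*C1*Ma ≤ (C1 + C2) + N*C2*Mb := by
  have e1 : kR = (N^2 + N*a)/2 := by rw [hNsq, hNa]; ring
  have e2 : nR - kR = (N^2 - N*a)/2 := by rw [hNsq, hNa]; ring
  have h3 : kR*Ma - (nR-kR)*Mb ≤ N := by
    have heq : kR*Ma - (nR-kR)*Mb = (N/2)*((N+a)*Ma - (N-a)*Mb) := by
      linear_combination Ma * e1 - Mb * e2
    rw [heq]
    nlinarith
  have h4a := mul_le_mul_of_nonneg_right h3 hC1n
  have h5 : kR*C2*Mb = (nR-kR)*C1*Mb := by rw [hRatio]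
  have h4 : kR*C1*Ma - kR*C2*Mb ≤ N*C1 := by nlinarith [h4a, h5]
  have h6 := mul_le_mul_of_nonneg_left h4 (le_of_lt hN)
  have h7 : N*(N*C1) = nR*C1 := by rw [← hNsq]; ring
  have h8 : nR*C1 = kR*C1 + kR*C2 := by linarith [hRatio]
  have h9 : 0 ≤ kR*(C1 + C2 + N*C2*Mb - N*C1*Ma) := by nlinarith [h6, h7, h8]
  nlinarith [h9, hk0]

lemma pascal_cast (n k : ℕ) (hn : 1 ≤ n) (hk : 1 ≤ k) :
    (n.choose k : ℝ) = ((n-1).choose (k-1) : ℝ) + ((n-1).choose k : ℝ) := by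
  obtain ⟨n', rfl⟩ : ∃ n', n = n'+1 := ⟨n-1, by omega⟩
  obtain ⟨k', rfl⟩ : ∃ k', k = k'+1 := ⟨k-1, by omega⟩
  simp [Nat.choose_succ_succ]

lemma ratio_cast (n k : ℕ) (hn : 1 ≤ n) (hk : 1 ≤ k) (hkn : k ≤ n) :
    (k:ℝ) * ((n-1).choose k : ℝ) = ((n:ℝ) - k) * ((n-1).choose (k-1) : ℝ) := by
  obtain ⟨n', rfl⟩ : ∃ n', n = n'+1 := ⟨n-1, by omega⟩
  obtain ⟨k', rfl⟩ : ∃ k', k = k'+1 := ⟨k-1, by omega⟩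
  have h := Nat.choose_succ_right_eq n' k'
  have hcast : ((n'.choose (k'+1) * (k'+1) : ℕ) : ℝ) = ((n'.choose k' * (n' - k') : ℕ) : ℝ) := by
    exact_mod_cast congrArg (Nat.cast (R := ℝ)) h
  have hk'n' : k' ≤ n' := by omega
  push_cast [Nat.cast_sub hk'n'] at hcast ⊢
  push_cast
  linarith [hcast]

lemma keyLemma (n : ℕ) (hn : 1 ≤ n) (d : ℕ) : ∀ k : ℕ, n ≤ 2*k → k ≤ n → n - k ≤ d →
    Real.sqrt n * ((n-1).choose (k-1) : ℝ) * Mfun ((2*k - n)/Real.sqrt n)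
      ≤ ∑ i ∈ Finset.Icc k n, (n.choose i : ℝ) := by
  have hn0 : (0:ℝ) < n := by exact_mod_cast hn
  have hN : (0:ℝ) < Real.sqrt n := Real.sqrt_pos.mpr hn0
  have hNsq : (Real.sqrt n)^2 = (n:ℝ) := Real.sq_sqrt (le_of_lt hn0)
  induction d with
  | zero =>
    intro k hk1 hk2 hk3
    have hkn : k = n := by omega
    subst hkn
    rw [Finset.Icc_self, Finset.sum_singleton, Nat.choose_self, Nat.choose_self]
    have hx : (2*(k:ℝ) - k)/Real.sqrt k = Real.sqrt k := by
      rw [show 2*(k:ℝ) - k = (k:ℝ) by ring, Real.div_sqrt]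
    rw [hx]
    have := tM_le_one (Real.sqrt k) (Real.sqrt_nonneg _)
    push_cast
    nlinarith
  | succ d ih =>
    intro k hk1 hk2 hk3
    by_cases hcase : n - k ≤ d
    · exact ih k hk1 hk2 hcase
    have hkn : k < n := by omega
    have hk1' : 1 ≤ k := by omega
    have hsplit : ∑ i ∈ Finset.Icc k n, (n.choose i : ℝ)
        = (n.choose k : ℝ) + ∑ i ∈ Finset.Icc (k+1) n, (n.choose i : ℝ) := by
      have hins : Finset.Icc k n = insert k (Finset.Icc (k+1) n) := by
        ext i; simp; omega
      rw [hins, Finset.sum_insert (by simp)]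
    have htail := ih (k+1) (by omega) (by omega) (by omega)
    set N := Real.sqrt n with hNdef
    set a := (2*(k:ℝ) - n)/N with hadef
    have hNa : N * a = 2*(k:ℝ) - n := by
      rw [hadef]; field_simp
    have ha : 0 ≤ a := by
      apply div_nonneg _ (le_of_lt hN)
      have : (n:ℝ) ≤ 2*(k:ℝ) := by exact_mod_cast hk1
      linarith
    have hbval : (2*((k:ℝ)+1) - n)/N = a + 2/N := by
      rw [hadef, ← add_div]
      congr 1; ring
    have hstar := star N a hN ha
    set C1 := (((n-1).choose (k-1) : ℕ) : ℝ) with hC1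
    set C2 := (((n-1).choose k : ℕ) : ℝ) with hC2
    have hC1n : 0 ≤ C1 := by positivity
    have hC2n : 0 ≤ C2 := by positivity
    have hPascal := pascal_cast n k hn hk1'
    have hRatio := ratio_cast n k hn hk1' (le_of_lt hkn)
    set Ma := Mfun a with hMa
    set Mb := Mfun (a + 2/N) with hMb
    have hMan : 0 ≤ Ma := Mfun_nonneg a
    have hMbn : 0 ≤ Mb := Mfun_nonneg _
    have hk0 : (0:ℝ) < k := by exact_mod_cast hk1'
    have hstep : N * C1 * Ma ≤ (n.choose k : ℝ) + N * C2 * Mb := by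
      rw [hPascal]
      exact algebra_step N a k n C1 C2 Ma Mb hN hk0 hNsq hNa hC1n hRatio hstar
    rw [hsplit]
    have htail' : N * C2 * Mb ≤ ∑ i ∈ Finset.Icc (k+1) n, (n.choose i : ℝ) := by
      have : ((k:ℝ)+1) = ((k+1 : ℕ) : ℝ) := by push_cast; ring
      rw [hMb, ← hbval]
      have hsimp : (2*((k:ℝ)+1) - n) = (2*((k+1:ℕ):ℝ) - n) := by push_cast; ring
      rw [hsimp]
      simpa [hC2, Nat.add_sub_cancel] using htail
    calc N * C1 * Ma ≤ (n.choose k : ℝ) + N * C2 * Mb := hstep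
      _ ≤ (n.choose k : ℝ) + ∑ i ∈ Finset.Icc (k+1) n, (n.choose i : ℝ) := by linarith

end McKayAux

section McKayAux2
open MeasureTheory Set Filter

lemma sqrt2pi_pos : (0:ℝ) < Real.sqrt (2*π) := Real.sqrt_pos.mpr (by positivity)

lemma one_sub_cdf (x : ℝ) : 1 - stdGaussCDF x = (Real.sqrt (2*π))⁻¹ * Efun x := by
  have hcdf : stdGaussCDF x = (Real.sqrt (2*π))⁻¹ * ∫ t in Iic x, Real.exp (-t^2/2) := by
    unfold stdGaussCDF stdGaussPDF
    rw [integral_const_mul]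
  have htot : (∫ t in Iic x, Real.exp (-t^2/2)) + Efun x = Real.sqrt (2*π) := by
    have h := integral_add_compl (measurableSet_Iic (a := x)) gint
    rw [compl_Iic] at h
    rw [← gtot]
    exact h
  rw [hcdf]
  have hs := sqrt2pi_pos
  have h3 : (Real.sqrt (2*π))⁻¹ * ((∫ t in Iic x, Real.exp (-t^2/2)) + Efun x) = 1 := by
    rw [htot]
    field_simp
  linarith [h3]

lemma mills_eq (x : ℝ) : (1 - stdGaussCDF x) / stdGaussPDF x = Mfun x := by
  rw [one_sub_cdf]
  unfold stdGaussPDF Mfun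
  rw [mul_div_mul_left _ _ (inv_ne_zero (ne_of_gt sqrt2pi_pos))]
  rw [div_eq_iff (Real.exp_ne_zero _)]
  have h1 : Real.exp (x^2/2) * Real.exp (-x^2/2) = 1 := by
    rw [← Real.exp_add]; ring_nf; exact Real.exp_zero
  have h2 : -x^2/2 = -x^2/2 := rfl
  linear_combination (-Efun x) * h1

end McKayAux2

/-- McKay's lower bound on the binomial tail: for integers `1 ≤ n` and
`n/2 ≤ k ≤ n`, with `x = (2k − n)/√n` and `B_n ~ B(n, 1/2)`,
`Pr[B_n ≥ k] ≥ √n · C(n−1, k−1) · 2^{−n} · (1 − Φ(x))/φ(x)`. -/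
theorem binomial_tail_mckay (n k : ℕ) (hn : 1 ≤ n)
    (hk1 : (n : ℝ) / 2 ≤ (k : ℝ)) (hk2 : k ≤ n) :
    (∑ i ∈ Finset.Icc k n, (n.choose i : ℝ) / 2 ^ n) ≥
      Real.sqrt n * ((n - 1).choose (k - 1) : ℝ) * (2 ^ n)⁻¹ *
        ((1 - stdGaussCDF ((2 * (k : ℝ) - n) / Real.sqrt n)) /
          stdGaussPDF ((2 * (k : ℝ) - n) / Real.sqrt n)) := by
  have hk : n ≤ 2*k := by
    have h : (n:ℝ) ≤ 2*(k:ℝ) := by linarith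
    exact_mod_cast h
  have hkey := keyLemma n hn (n - k) k hk hk2 (le_refl _)
  rw [mills_eq, ge_iff_le, ← Finset.sum_div]
  have hinv : (0:ℝ) ≤ ((2:ℝ)^n)⁻¹ := by positivity
  calc Real.sqrt n * ((n - 1).choose (k - 1) : ℝ) * (2 ^ n)⁻¹ * Mfun ((2 * (k:ℝ) - n) / Real.sqrt n)
      = (Real.sqrt n * ((n - 1).choose (k - 1) : ℝ) * Mfun ((2 * (k:ℝ) - n) / Real.sqrt n)) * ((2:ℝ)^n)⁻¹ := by ring
    _ ≤ (∑ i ∈ Finset.Icc k n, (n.choose i : ℝ)) * ((2:ℝ)^n)⁻¹ := by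
        apply mul_le_mul_of_nonneg_right _ hinv
        exact hkey
    _ = (∑ i ∈ Finset.Icc k n, (n.choose i : ℝ)) / 2^n := by rw [div_eq_mul_inv]
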